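/- Let Q be an invertible real d×d matrix, let Q̂ = Q / ‖Q‖_F be its spectral-bounding normalization, and let M = Q̂ · Q̂ᵀ. Then M is symmetric positive definite, every eigenvalue of M lies in the interval (0, 1], and ‖I − M‖₂ < 1, where ‖·‖₂ denotes the L2 operator norm (spectral norm) of a matrix. -/

import Mathlib

open Matrix

/-- The Frobenius norm of a real matrix: `‖M‖_F = sqrt (∑ i j, M i j ^ 2)`. -/
noncomputable def frobNorm {m n : ℕ} (M : Matrix (Fin m) (Fin n) ℝ) : ℝ :=
  Real.sqrt (∑ i, ∑ j, (M i j) ^ 2)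

/-- The L2 operator norm (spectral norm) of a real square matrix, i.e. the operator norm
of the induced linear map on Euclidean space `ℝ^d`. -/
noncomputable def l2OpNorm {d : ℕ} (M : Matrix (Fin d) (Fin d) ℝ) : ℝ :=
  ‖LinearMap.toContinuousLinearMap (Matrix.toEuclideanLin M)‖

lemma sum_sq_pos_of_ne_zero {d : ℕ} {y : Fin d → ℝ} (hy : y ≠ 0) :
    0 < ∑ j, y j ^ 2 := by
  obtain ⟨j, hj⟩ : ∃ j, y j ≠ 0 := by
    by_contra h
    push_neg at h
    exact hy (funext fun j => h j)
  exact Finset.sum_pos' (fun i _ => sq_nonneg _)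
    ⟨j, Finset.mem_univ j, by positivity⟩

lemma mulVec_sum_sq_le {d e : ℕ} (A : Matrix (Fin d) (Fin e) ℝ) (y : Fin e → ℝ) :
    ∑ i, (A *ᵥ y) i ^ 2 ≤ (∑ i, ∑ j, A i j ^ 2) * ∑ j, y j ^ 2 := by
  have h : ∀ i : Fin d, (A *ᵥ y) i ^ 2 ≤ (∑ j, A i j ^ 2) * ∑ j, y j ^ 2 := by
    intro i
    have := Finset.sum_mul_sq_le_sq_mul_sq Finset.univ (fun j => A i j) y
    simpa [Matrix.mulVec, dotProduct] using this
  calc ∑ i, (A *ᵥ y) i ^ 2 ≤ ∑ i, ((∑ j, A i j ^ 2) * ∑ j, y j ^ 2) :=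
        Finset.sum_le_sum fun i _ => h i
    _ = (∑ i, ∑ j, A i j ^ 2) * ∑ j, y j ^ 2 := by rw [← Finset.sum_mul]

lemma euclidean_norm_sq {d : ℕ} (x : EuclideanSpace ℝ (Fin d)) :
    ‖x‖ ^ 2 = ∑ i, x i ^ 2 := by
  rw [EuclideanSpace.norm_eq, Real.sq_sqrt (by positivity)]
  simp [Real.norm_eq_abs, sq_abs]

set_option maxHeartbeats 2000000 in
/-- Spectral bounding: if `Q` is invertible and `Q̂ = Q / ‖Q‖_F`, then `M = Q̂ Q̂ᵀ` is
symmetric positive definite, its eigenvalues lie in `(0, 1]`, and `‖I − M‖₂ < 1`. -/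
theorem spectral_bounding {d : ℕ} (Q : Matrix (Fin d) (Fin d) ℝ) (hQ : IsUnit Q)
    (Qhat : Matrix (Fin d) (Fin d) ℝ) (hQhat : Qhat = (frobNorm Q)⁻¹ • Q)
    (M : Matrix (Fin d) (Fin d) ℝ) (hM : M = Qhat * Qhatᵀ) :
    M.PosDef ∧
      (∀ μ : ℝ, Module.End.HasEigenvalue (Matrix.toLin' M) μ → μ ∈ Set.Ioc (0 : ℝ) 1) ∧
      l2OpNorm (1 - M) < 1 := by
  rcases Nat.eq_zero_or_pos d with hd | hd
  · subst hd
    refine ⟨⟨Subsingleton.elim _ _, fun x hx => absurd (Subsingleton.elim x 0) hx⟩, ?_, ?_⟩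
    · intro μ hμ
      obtain ⟨v, hv⟩ := hμ.exists_hasEigenvector
      exact absurd (Subsingleton.elim v 0) hv.2
    · have : LinearMap.toContinuousLinearMap (Matrix.toEuclideanLin (1 - M)) = 0 := by
        ext x i
        exact i.elim0
      rw [l2OpNorm, this, norm_zero]
      exact one_pos
  -- main case `0 < d`
  have hQ0 : Q ≠ 0 := by
    rintro rfl
    have hdet := hQ.map (Matrix.detMonoidHom (n := Fin d) (R := ℝ))
    have : Nonempty (Fin d) := ⟨⟨0, hd⟩⟩
    simp [Matrix.detMonoidHom, Matrix.det_zero] at hdet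
  have hS : 0 < ∑ i, ∑ j, Q i j ^ 2 := by
    obtain ⟨i, j, hij⟩ : ∃ i j, Q i j ≠ 0 := by
      by_contra h
      push_neg at h
      exact hQ0 (by ext i j; exact h i j)
    refine Finset.sum_pos' (fun i _ => Finset.sum_nonneg fun j _ => sq_nonneg _)
      ⟨i, Finset.mem_univ i, ?_⟩
    exact Finset.sum_pos' (fun j _ => sq_nonneg _) ⟨j, Finset.mem_univ j, by positivity⟩
  have hfrob : 0 < frobNorm Q := Real.sqrt_pos.mpr hS
  set c : ℝ := (frobNorm Q)⁻¹ with hc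
  have hc0 : c ≠ 0 := inv_ne_zero hfrob.ne'
  have hc2 : c ^ 2 = (∑ i, ∑ j, Q i j ^ 2)⁻¹ := by
    rw [hc, frobNorm, ← Real.sqrt_inv, Real.sq_sqrt (by positivity)]
  -- the Frobenius norm of Qhat is 1
  have hQhat1 : ∑ i, ∑ j, Qhat i j ^ 2 = 1 := by
    have : ∀ i j, Qhat i j = c * Q i j := by
      intro i j; rw [hQhat]; rfl
    simp only [this, mul_pow, ← Finset.mul_sum]
    rw [hc2, inv_mul_cancel₀ hS.ne']
  have hQhatT1 : ∑ i, ∑ j, Qhatᵀ i j ^ 2 = 1 := by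
    rw [Finset.sum_comm]
    simpa [Matrix.transpose_apply] using hQhat1
  -- Qhatᵀ is invertible, so `Qhatᵀ *ᵥ x ≠ 0` for `x ≠ 0`
  have hdetQhat : IsUnit Qhatᵀ.det := by
    rw [Matrix.det_transpose, hQhat, Matrix.det_smul, isUnit_iff_ne_zero]
    have hdQ : Q.det ≠ 0 := by
      have := (Matrix.isUnit_iff_isUnit_det Q).mp hQ
      rwa [isUnit_iff_ne_zero] at this
    positivity
  have hker : ∀ x : Fin d → ℝ, x ≠ 0 → Qhatᵀ *ᵥ x ≠ 0 := by
    intro x hx h0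
    apply hx
    have := congrArg (fun v => (Qhatᵀ)⁻¹ *ᵥ v) h0
    simpa [Matrix.mulVec_mulVec, Matrix.nonsing_inv_mul _ hdetQhat] using this
  -- key identity : xᵀ M x = ‖Qhatᵀ x‖²
  have key1 : ∀ x : Fin d → ℝ, x ⬝ᵥ (M *ᵥ x) = ∑ j, (Qhatᵀ *ᵥ x) j ^ 2 := by
    intro x
    rw [hM, ← Matrix.mulVec_mulVec, Matrix.dotProduct_mulVec, ← Matrix.mulVec_transpose]
    simp [dotProduct, sq]
  -- positive definiteness
  have hPD : M.PosDef := by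
    rw [Matrix.posDef_iff_dotProduct_mulVec]
    constructor
    · have := (Matrix.posSemidef_self_mul_conjTranspose Qhat).1
      rwa [Matrix.conjTranspose_eq_transpose_of_trivial, ← hM] at this
    · intro x hx
      rw [star_trivial, key1 x]
      exact sum_sq_pos_of_ne_zero (hker x hx)
  refine ⟨hPD, ?_, ?_⟩
  · -- eigenvalues in (0, 1]
    intro μ hμ
    obtain ⟨v, hv⟩ := hμ.exists_hasEigenvector
    have hveq : M *ᵥ v = μ • v := by
      have := hv.apply_eq_smul
      rwa [Matrix.toLin'_apply] at this
    have hvne : v ≠ 0 := hv.2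
    have hsum : v ⬝ᵥ (M *ᵥ v) = μ * ∑ i, v i ^ 2 := by
      rw [hveq]
      simp only [dotProduct, Pi.smul_apply, smul_eq_mul, Finset.mul_sum]
      exact Finset.sum_congr rfl fun i _ => by ring
    have hv2 : 0 < ∑ i, v i ^ 2 := sum_sq_pos_of_ne_zero hvne
    have hpos : 0 < μ * ∑ i, v i ^ 2 := by
      rw [← hsum, key1 v]
      exact sum_sq_pos_of_ne_zero (hker v hvne)
    have hle : μ * ∑ i, v i ^ 2 ≤ ∑ i, v i ^ 2 := by
      rw [← hsum, key1 v]
      have := mulVec_sum_sq_le Qhatᵀ v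
      rwa [hQhatT1, one_mul] at this
    constructor
    · nlinarith [hpos, hv2]
    · exact le_of_mul_le_mul_right (by linarith [hle]) hv2
  · -- operator norm bound
    set T := LinearMap.toContinuousLinearMap (Matrix.toEuclideanLin (1 - M)) with hT
    have hTapp : ∀ (x : EuclideanSpace ℝ (Fin d)) (i : Fin d),
        T x i = ((1 - M) *ᵥ (x : Fin d → ℝ)) i := fun x i => rfl
    -- pointwise strict bound on the unit sphere
    have hpt : ∀ x : EuclideanSpace ℝ (Fin d), ‖x‖ = 1 → ‖T x‖ < 1 := by
      intro x hx
      have hxne : (x : Fin d → ℝ) ≠ 0 := by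
        intro h
        rw [show x = 0 from by simpa using h] at hx
        simp at hx
      set y : Fin d → ℝ := Qhatᵀ *ᵥ (x : Fin d → ℝ) with hy
      have hty : 0 < ∑ j, y j ^ 2 := sum_sq_pos_of_ne_zero (hker _ hxne)
      have hMx : ∀ i, (M *ᵥ (x : Fin d → ℝ)) i = (Qhat *ᵥ y) i := by
        intro i
        rw [hy, Matrix.mulVec_mulVec, ← hM]
      have hMxsq : ∑ i, (M *ᵥ (x : Fin d → ℝ)) i ^ 2 ≤ ∑ j, y j ^ 2 := by
        calc ∑ i, (M *ᵥ (x : Fin d → ℝ)) i ^ 2 = ∑ i, (Qhat *ᵥ y) i ^ 2 := by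
              simp only [hMx]
          _ ≤ (∑ i, ∑ j, Qhat i j ^ 2) * ∑ j, y j ^ 2 := mulVec_sum_sq_le _ _
          _ = ∑ j, y j ^ 2 := by rw [hQhat1, one_mul]
      have hxMx : ∑ i, (x : Fin d → ℝ) i * (M *ᵥ (x : Fin d → ℝ)) i = ∑ j, y j ^ 2 := by
        have := key1 (x : Fin d → ℝ)
        simpa [dotProduct, hy] using this
      have hx2 : ∑ i, (x : Fin d → ℝ) i ^ 2 = 1 := by
        rw [← euclidean_norm_sq, hx, one_pow]
      have hTx2 : ‖T x‖ ^ 2 = ∑ i, ((x : Fin d → ℝ) i - (M *ᵥ (x : Fin d → ℝ)) i) ^ 2 := by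
        rw [euclidean_norm_sq]
        congr 1
        ext i
        rw [hTapp x i, Matrix.sub_mulVec, Matrix.one_mulVec]
        rfl
      have hexp : ‖T x‖ ^ 2 = (∑ i, (x : Fin d → ℝ) i ^ 2)
          - 2 * (∑ i, (x : Fin d → ℝ) i * (M *ᵥ (x : Fin d → ℝ)) i)
          + ∑ i, (M *ᵥ (x : Fin d → ℝ)) i ^ 2 := by
        rw [hTx2, Finset.mul_sum, ← Finset.sum_sub_distrib, ← Finset.sum_add_distrib]
        exact Finset.sum_congr rfl fun i _ => by ring
      have hlt : ‖T x‖ ^ 2 < 1 := by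
        rw [hexp, hx2, hxMx]
        linarith [hMxsq, hty]
      nlinarith [norm_nonneg (T x)]
    -- maximize over the compact sphere
    have hne : ∃ x : EuclideanSpace ℝ (Fin d), ‖x‖ = 1 :=
      ⟨EuclideanSpace.single ⟨0, hd⟩ (1 : ℝ), by simp⟩
    obtain ⟨x₀, hx₀⟩ := hne
    have hsph : (Metric.sphere (0 : EuclideanSpace ℝ (Fin d)) 1).Nonempty :=
      ⟨x₀, by simpa [mem_sphere_iff_norm] using hx₀⟩
    obtain ⟨z, hzmem, hzmax⟩ := (isCompact_sphere (0 : EuclideanSpace ℝ (Fin d)) 1).exists_isMaxOn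
      hsph ((T.continuous.norm).continuousOn)
    have hzn : ‖z‖ = 1 := by simpa [mem_sphere_iff_norm] using hzmem
    have hnorm_le : l2OpNorm (1 - M) ≤ ‖T z‖ := by
      rw [l2OpNorm, ← hT]
      apply ContinuousLinearMap.opNorm_le_bound _ (norm_nonneg _)
      intro y
      rcases eq_or_ne y 0 with rfl | hy0
      · simp
      · have hyn : 0 < ‖y‖ := norm_pos_iff.mpr hy0
        have hu : ‖(‖y‖⁻¹ • y)‖ = 1 := by
          rw [norm_smul, norm_inv, norm_norm, inv_mul_cancel₀ hyn.ne']
        have hmem : (‖y‖⁻¹ • y) ∈ Metric.sphere (0 : EuclideanSpace ℝ (Fin d)) 1 := by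
          simpa [mem_sphere_iff_norm] using hu
        have hle2 := hzmax hmem
        simp only [Set.mem_setOf_eq] at hle2
        rw [_root_.map_smul, norm_smul, norm_inv, norm_norm] at hle2
        calc ‖T y‖ = ‖y‖ * (‖y‖⁻¹ * ‖T y‖) := by
              field_simp
          _ ≤ ‖y‖ * ‖T z‖ := by
              apply mul_le_mul_of_nonneg_left _ (norm_nonneg y)
              exact hle2
          _ = ‖T z‖ * ‖y‖ := mul_comm _ _
    exact lt_of_le_of_lt hnorm_le (hpt z hzn)
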